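/- Let K be an infinite field and let a be a function assigning to each ordered pair (λ, μ) ∈ K × K with λ ≠ μ a nonzero element a(λ, μ) ∈ K, and suppose that a(λ,μ)·a(λ,ν) − a(λ,μ)·a(μ,ν) − a(λ,ν)·a(ν,μ) = 0 for all pairwise distinct λ, μ, ν ∈ K. Then there exist an injective function f : K → K and a nowhere-vanishing function g : K → K such that a(λ, μ) = g(μ)/(f(λ) − f(μ)) for all λ ≠ μ. -/

import Mathlib

/-- Let `K` be an infinite field and let `a` assign a nonzero value to each ordered pair of
distinct elements of `K`, satisfying
`a(λ,μ)a(λ,ν) − a(λ,μ)a(μ,ν) − a(λ,ν)a(ν,μ) = 0` for all pairwise distinct `λ, μ, ν`.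
Then there are an injective `f : K → K` and a nowhere-vanishing `g : K → K` with
`a(λ,μ) = g(μ)/(f(λ) − f(μ))` for all `λ ≠ μ`. -/
theorem functional_equation_a
    {K : Type*} [Field K] [Infinite K]
    (a : K → K → K)
    (ha : ∀ l m : K, l ≠ m → a l m ≠ 0)
    (heq : ∀ l m n : K, l ≠ m → l ≠ n → m ≠ n →
      a l m * a l n - a l m * a m n - a l n * a n m = 0) :
    ∃ f g : K → K, Function.Injective f ∧ (∀ x, g x ≠ 0) ∧
      ∀ l m : K, l ≠ m → a l m = g m / (f l - f m) := by
  classical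
  refine ⟨fun l => if l = 0 then 0 else (a l 0)⁻¹,
    fun m => if m = 0 then 1 else -(a 0 m) / (a m 0), ?_, ?_, ?_⟩
  · -- injectivity
    intro x y h
    by_contra hxy
    simp only at h
    by_cases hx : x = 0
    · subst hx
      rw [if_pos rfl, if_neg (Ne.symm hxy)] at h
      exact (inv_ne_zero (ha y 0 (Ne.symm hxy))) h.symm
    · by_cases hy : y = 0
      · subst hy
        rw [if_neg hx, if_pos rfl] at h
        exact (inv_ne_zero (ha x 0 hx)) h
      · rw [if_neg hx, if_neg hy] at h
        have hax : a x 0 = a y 0 := inv_injective h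
        have h1 := heq x y 0 hxy hx hy
        have h2 : a x 0 * a 0 y = 0 := by linear_combination a x y * hax - h1
        exact (mul_ne_zero (ha x 0 hx) (ha 0 y (Ne.symm hy))) h2
  · -- g nonzero
    intro x
    by_cases hx : x = 0
    · simp [hx]
    · simp only [if_neg hx]
      exact div_ne_zero (neg_ne_zero.mpr (ha 0 x (Ne.symm hx))) (ha x 0 hx)
  · -- main identity
    intro l m hlm
    simp only
    by_cases hl : l = 0
    · subst hl
      have hm : m ≠ 0 := Ne.symm hlm
      rw [if_pos rfl, if_neg hm, if_neg hm]
      have h1 := ha m 0 hm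
      field_simp
      ring
    · by_cases hm : m = 0
      · subst hm
        rw [if_neg hl, if_pos rfl, if_pos rfl]
        have h1 := ha l 0 hl
        field_simp
        ring
      · rw [if_neg hl, if_neg hm, if_neg hm]
        have h1 := heq l m 0 hlm hl hm
        have hal := ha l 0 hl
        have ham := ha m 0 hm
        have ha0m := ha 0 m (Ne.symm hm)
        have hne : (a l 0)⁻¹ - (a m 0)⁻¹ ≠ 0 := by
          rw [sub_ne_zero]
          intro h
          have hax : a l 0 = a m 0 := inv_injective h
          have h2 : a l 0 * a 0 m = 0 := by linear_combination a l m * hax - h1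
          exact (mul_ne_zero hal ha0m) h2
        rw [div_div, eq_div_iff (mul_ne_zero ham hne)]
        have step : a m 0 * ((a l 0)⁻¹ - (a m 0)⁻¹) = (a m 0 - a l 0) / a l 0 := by
          field_simp
        rw [step, mul_div_assoc', div_eq_iff hal]
        linear_combination -h1
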